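/- arXiv:1102.2478 — 4 statements merged into one kernel-verified Lean document; each statement's English description precedes it below -/
import Mathlib

section
/- A nonzero polynomial in one variable over a field of characteristic 0 that has exactly l nonzero monomials cannot have a root of multiplicity at least l at any nonzero point. -/
open Polynomial

lemma card_supp_X_mul {k : Type*} [Field k] (Q : Polynomial k) :
    ((X : Polynomial k) * Q).support.card = Q.support.card := by
  symm
  apply Finset.card_bij (fun n _ => n + 1)
  · intro n hn
    rw [mem_support_iff, coeff_X_mul]
    exact mem_support_iff.mp hn
  · intro x _ y _ h; omega
  · intro m hm
    have h0 : ((X : Polynomial k) * Q).coeff 0 = 0 := X_dvd_iff.mp ⟨Q, rfl⟩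
    have hm0 : m ≠ 0 := by
      intro h; rw [h] at hm; exact mem_support_iff.mp hm h0
    refine ⟨m - 1, ?_, by omega⟩
    rw [mem_support_iff, ← coeff_X_mul]
    have : m - 1 + 1 = m := by omega
    rw [this]
    exact mem_support_iff.mp hm

lemma card_supp_deriv {k : Type*} [Field k] [CharZero k] (P : Polynomial k) :
    (derivative P).support.card = (P.support.erase 0).card := by
  apply Finset.card_bij (fun n _ => n + 1)
  · intro n hn
    exact Finset.mem_erase.mpr ⟨Nat.succ_ne_zero n, mem_support_derivative.mp hn⟩
  · intro x _ y _ h; omega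
  · intro m hm
    obtain ⟨hm0, hm⟩ := Finset.mem_erase.mp hm
    refine ⟨m - 1, ?_, by omega⟩
    rw [mem_support_derivative]
    have : m - 1 + 1 = m := by omega
    rw [this]; exact hm

lemma key {k : Type*} [Field k] [CharZero k] (a : k) (ha : a ≠ 0) :
    ∀ l n : ℕ, ∀ P : Polynomial k, P ≠ 0 → P.support.card = l → P.natDegree = n →
      ¬ (X - C a) ^ l ∣ P := by
  intro l
  induction l with
  | zero =>
    intro n P hP hcard _ _
    exact hP (support_eq_empty.mp (Finset.card_eq_zero.mp hcard))
  | succ l ih =>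
    intro n
    induction n using Nat.strong_induction_on with
    | _ n ihn =>
      intro P hP hcard hdeg hdvd
      rcases Nat.eq_zero_or_pos l with rfl | hl
      · -- P is a monomial C c * X^m, a is a root, contradiction
        obtain ⟨m, c, hc, rfl⟩ := card_support_eq_one.mp hcard
        have hroot : (C c * X ^ m).IsRoot a :=
          dvd_iff_isRoot.mp (by simpa using hdvd)
        simp only [IsRoot, eval_mul, eval_C, eval_pow, eval_X, mul_eq_zero,
          pow_eq_zero_iff'] at hroot
        tauto
      · by_cases h0 : P.coeff 0 = 0
        · obtain ⟨Q, rfl⟩ := X_dvd_iff.mpr h0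
          have hQ : Q ≠ 0 := by rintro rfl; simp at hP
          have hcop : IsCoprime ((X - C a) ^ (l + 1)) (X : Polynomial k) := by
            have : IsCoprime (X - C a) ((X : Polynomial k) - C 0) :=
              isCoprime_X_sub_C_of_isUnit_sub (by simpa using Ne.isUnit ha)
            simpa using this.pow_left
          have hdvdQ : (X - C a) ^ (l + 1) ∣ Q :=
            hcop.dvd_of_dvd_mul_left hdvd
          have hdegQ : Q.natDegree < n := by
            have : (X * Q).natDegree = 1 + Q.natDegree := by
              rw [natDegree_mul X_ne_zero hQ, natDegree_X]
            omega
          exact ihn Q.natDegree hdegQ Q hQ (by rw [← card_supp_X_mul]; exact hcard) rfl hdvdQ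
        · -- use derivative
          have h0mem : 0 ∈ P.support := mem_support_iff.mpr h0
          have hcardD : (derivative P).support.card = l := by
            rw [card_supp_deriv, Finset.card_erase_of_mem h0mem, hcard]; omega
          have hD : derivative P ≠ 0 := by
            intro h
            rw [h] at hcardD
            simp at hcardD
            omega
          have hdvdD : (X - C a) ^ l ∣ derivative P := by
            have := pow_sub_one_dvd_derivative_of_pow_dvd hdvd
            simpa using this
          exact ih (derivative P).natDegree (derivative P) hD hcardD rfl hdvdD

/-- A nonzero polynomial in one variable over a field of characteristic 0 with
exactly `l` nonzero monomials cannot have a root of multiplicity at least `l`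
at any nonzero point. -/
theorem stmt_0 {k : Type*} [Field k] [CharZero k] (P : Polynomial k) (hP : P ≠ 0)
    (l : ℕ) (hl : P.support.card = l) (a : k) (ha : a ≠ 0) :
    ¬ (X - C a) ^ l ∣ P := by
  exact key a ha l P.natDegree P hP hl rfl
end

section
/- A trinomial polynomial a·z^p + b·z^q + c·z^r over a field of characteristic 0, with a, b, c nonzero and p, q, r pairwise distinct, has no root of multiplicity at least 3 at any nonzero point. -/
open Polynomial

lemma aux_d1 {k : Type*} [Field k] (z u : k) (n : ℕ) :
    eval z (derivative (C u * X ^ n)) * z = u * ((n : k) * z ^ n) := by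
  rw [derivative_C_mul, derivative_X_pow]
  cases n with
  | zero => simp
  | succ m => simp [pow_succ]; ring

lemma aux_d2 {k : Type*} [Field k] (z u : k) (n : ℕ) :
    eval z (derivative (derivative (C u * X ^ n))) * z ^ 2 =
      u * (((n : k) ^ 2 - n) * z ^ n) := by
  rw [derivative_C_mul, derivative_C_mul, derivative_X_pow, derivative_C_mul,
    derivative_X_pow]
  match n with
  | 0 => simp
  | 1 => simp
  | (m + 2) =>
    have h : (m + 2) - 1 - 1 = m := rfl
    simp only [h, eval_mul, eval_C, eval_pow, eval_X, eval_natCast]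
    push_cast
    ring

/-- A trinomial `a·z^p + b·z^q + c·z^r` (with `a, b, c ≠ 0` and `p, q, r`
pairwise distinct) over a field of characteristic 0 has no root of
multiplicity at least 3 at a nonzero point. -/
theorem stmt_3 {k : Type*} [Field k] [CharZero k] (a b c : k)
    (ha : a ≠ 0) (hb : b ≠ 0) (hc : c ≠ 0)
    (p q r : ℕ) (hpq : p ≠ q) (hpr : p ≠ r) (hqr : q ≠ r)
    (z : k) (hz : z ≠ 0) :
    ¬ (X - C z) ^ 3 ∣ (C a * X ^ p + C b * X ^ q + C c * X ^ r) := by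
  intro hdvd
  obtain ⟨g, hg⟩ := hdvd
  have h0 : eval z (C a * X ^ p + C b * X ^ q + C c * X ^ r) = 0 := by
    rw [hg]; simp
  have h1 : eval z (derivative (C a * X ^ p + C b * X ^ q + C c * X ^ r)) = 0 := by
    rw [hg]; simp [derivative_mul, derivative_pow]
  have h2 : eval z (derivative (derivative
      (C a * X ^ p + C b * X ^ q + C c * X ^ r))) = 0 := by
    rw [hg]; simp [derivative_mul, derivative_pow]
  have e0 : a * z ^ p + b * z ^ q + c * z ^ r = 0 := by simpa using h0
  have e1 : a * ((p : k) * z ^ p) + b * ((q : k) * z ^ q)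
      + c * ((r : k) * z ^ r) = 0 := by
    have h : eval z (derivative (C a * X ^ p + C b * X ^ q + C c * X ^ r)) * z
        = 0 := by rw [h1, zero_mul]
    rwa [derivative_add, derivative_add, eval_add, eval_add, add_mul, add_mul,
      aux_d1, aux_d1, aux_d1] at h
  have e2 : a * (((p : k) ^ 2 - p) * z ^ p) + b * (((q : k) ^ 2 - q) * z ^ q)
      + c * (((r : k) ^ 2 - r) * z ^ r) = 0 := by
    have h : eval z (derivative (derivative
        (C a * X ^ p + C b * X ^ q + C c * X ^ r))) * z ^ 2 = 0 := by
      rw [h2, zero_mul]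
    rwa [derivative_add, derivative_add, derivative_add, derivative_add,
      eval_add, eval_add, add_mul, add_mul, aux_d2, aux_d2, aux_d2] at h
  have hA : a * z ^ p ≠ 0 := mul_ne_zero ha (pow_ne_zero _ hz)
  have hpq' : (p : k) - q ≠ 0 := sub_ne_zero.mpr (by exact_mod_cast hpq)
  have hpr' : (p : k) - r ≠ 0 := sub_ne_zero.mpr (by exact_mod_cast hpr)
  have key : ((p : k) - q) * ((p : k) - r) * (a * z ^ p) = 0 := by
    linear_combination ((q : k) * r) * e0 + (1 - (q : k) - r) * e1 + e2
  exact mul_ne_zero (mul_ne_zero hpq' hpr') hA key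
end

section
/- If z ∈ (K*)^n is a root of P(z) = Σ a_i z^i, then the maximum max_i (val(a_i) + ⟨Val(z), i⟩) is attained for at least two distinct multi-indices i; i.e., Val(z) lies in the tropical hypersurface of the tropicalization of P. -/
/-- Kapranov: if `z ∈ (K*)^n` is a root of `P(z) = Σ_{i ∈ s} a_i z^i` (with `P`
not the zero polynomial), then the tropical maximum
`max_i (val a_i + ⟨Val z, i⟩)` is attained by at least two distinct
multi-indices, i.e. `Val z` lies in the tropical hypersurface of `Trop P`. -/
theorem stmt_7 {K : Type*} [Field K] {n : ℕ} (val : K → WithBot ℝ)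
    (h0 : val 0 = ⊥)
    (hmul : ∀ a b : K, val (a * b) = val a + val b)
    (hadd : ∀ a b : K, val (a + b) ≤ max (val a) (val b))
    (hne : ∀ a b : K, val a ≠ val b → val (a + b) = max (val a) (val b))
    (s : Finset (Fin n → ℕ)) (a : (Fin n → ℕ) → K) (z : Fin n → K)
    (hz : ∀ j, z j ≠ 0)
    (hnz : ∃ i ∈ s, a i ≠ 0)
    (hroot : ∑ i ∈ s, a i * ∏ j, z j ^ i j = 0) :
    ∃ i ∈ s, ∃ i' ∈ s, i ≠ i' ∧
      val (a i) + ∑ j, (i j) • val (z j) =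
        s.sup (fun i => val (a i) + ∑ j, (i j) • val (z j)) ∧
      val (a i') + ∑ j, (i' j) • val (z j) =
        s.sup (fun i => val (a i) + ∑ j, (i j) • val (z j)) := by
  classical
  set g : (Fin n → ℕ) → WithBot ℝ :=
    fun i => val (a i) + ∑ j, (i j) • val (z j) with hg
  set f : (Fin n → ℕ) → K := fun i => a i * ∏ j, z j ^ i j with hf
  -- val 1 is 0 or ⊥
  have h1 : val 1 = 0 ∨ val 1 = ⊥ := by
    by_cases hb : val 1 = ⊥
    · exact Or.inr hb
    · left
      obtain ⟨r, hr⟩ := WithBot.ne_bot_iff_exists.mp hb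
      have h := hmul 1 1
      rw [mul_one, ← hr, ← WithBot.coe_add, WithBot.coe_eq_coe] at h
      have hr0 : r = 0 := by linarith
      rw [← hr, hr0]; rfl
  -- val of each monomial
  have hval : ∀ i : Fin n → ℕ, val (f i) = g i := by
    rcases h1 with h1 | h1
    · have hpow : ∀ (x : K) (k : ℕ), val (x ^ k) = k • val x := by
        intro x k
        induction k with
        | zero => simp [h1]
        | succ k ih =>
            rw [pow_succ, hmul, ih, succ_nsmul]
      intro i
      have hprod : ∀ t : Finset (Fin n),
          val (∏ j ∈ t, z j ^ i j) = ∑ j ∈ t, (i j) • val (z j) := by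
        intro t
        induction t using Finset.cons_induction with
        | empty => simpa using h1
        | cons c t hc ih =>
            rw [Finset.prod_cons, Finset.sum_cons, hmul, ih, hpow]
      rw [hf, hg, hmul, hprod]
    · -- degenerate : val is constantly ⊥
      have hbot : ∀ x : K, val x = ⊥ := by
        intro x
        have h := hmul x 1
        rw [mul_one, h1, WithBot.add_bot] at h
        exact h
      intro i
      simp [hg, hbot, WithBot.bot_add]
  -- subadditivity over finite sums
  have hsum : ∀ (t : Finset (Fin n → ℕ)),
      val (∑ i ∈ t, f i) ≤ t.sup (fun i => val (f i)) := by
    intro t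
    induction t using Finset.cons_induction with
    | empty => simp [h0]
    | cons c t hc ih =>
        rw [Finset.sum_cons, Finset.sup_cons]
        exact le_trans (hadd _ _) (max_le_max le_rfl ih)
  obtain ⟨i1, hi1s, hi1⟩ := hnz
  have hs : s.Nonempty := ⟨i1, hi1s⟩
  obtain ⟨i0, hi0s, hi0⟩ := Finset.exists_mem_eq_sup s hs g
  set M := s.sup g with hM
  by_cases hcase : ∃ i' ∈ s, i' ≠ i0 ∧ g i' = M
  · obtain ⟨i', hi's, hi'ne, hi'⟩ := hcase
    exact ⟨i0, hi0s, i', hi's, fun h => hi'ne h.symm, hi0.symm, hi'⟩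
  push_neg at hcase
  exfalso
  -- products are nonzero
  have hprodne : ∀ i : Fin n → ℕ, (∏ j, z j ^ i j) ≠ 0 := by
    intro i
    exact Finset.prod_ne_zero_iff.mpr fun j _ => pow_ne_zero _ (hz j)
  by_cases hMbot : M = ⊥
  · -- then every g i = ⊥ = M, so s must be {i0}
    have hsing : s = {i0} := by
      apply Finset.eq_singleton_iff_unique_mem.mpr
      refine ⟨hi0s, fun x hx => ?_⟩
      by_contra hxne
      have hle : g x ≤ M := Finset.le_sup hx
      rw [hMbot] at hle
      exact hcase x hx hxne (le_bot_iff.mp hle |>.trans hMbot.symm)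
    rw [hsing] at hroot hi1s
    rw [Finset.sum_singleton] at hroot
    have : a i0 = 0 := by
      rcases mul_eq_zero.mp hroot with h | h
      · exact h
      · exact absurd h (hprodne i0)
    rw [Finset.mem_singleton.mp hi1s] at hi1
    exact hi1 this
  · -- unique strict max case: val of sum is M ≠ ⊥, contradiction with hroot
    have hMbot' : ⊥ < M := Ne.bot_lt hMbot
    have hrest : val (∑ i ∈ s.erase i0, f i) < M := by
      refine lt_of_le_of_lt (hsum _) ?_
      rw [Finset.sup_lt_iff hMbot']
      intro i hi
      have his : i ∈ s := Finset.mem_of_mem_erase hi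
      have hine : i ≠ i0 := Finset.ne_of_mem_erase hi
      have hle : g i ≤ M := Finset.le_sup his
      rw [hval i]
      exact lt_of_le_of_ne hle (hcase i his hine)
    have hsplit : f i0 + ∑ i ∈ s.erase i0, f i = ∑ i ∈ s, f i :=
      Finset.add_sum_erase s f hi0s
    have hvne : val (f i0) ≠ val (∑ i ∈ s.erase i0, f i) := by
      rw [hval i0, ← hi0]
      exact fun h => absurd h.symm (ne_of_lt hrest)
    have : val (f i0 + ∑ i ∈ s.erase i0, f i) = M := by
      rw [hne _ _ hvne, hval i0, ← hi0]
      exact max_eq_left hrest.le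
    rw [hsplit, hroot, h0] at this
    exact hMbot this.symm
end

section
/- For l ≥ 0, the second derivative of the rational function f(z) = -z^l/(1+z) has exactly 2 roots (counted with multiplicity) in k* \ {-1} when l ≥ 3, and no such roots when l ≤ 2. -/
open Polynomial

open Classical in
/-- The numerator of the second derivative of `f(z) = -z^l/(1+z)`, namely
`l(l-1)·z^{l-2}(1+z)² - 2l·z^{l-1}(1+z) + 2·z^l`, has exactly 2 roots counted
with multiplicity away from `z = 0` and `z = -1` when `l ≥ 3`, and no such
roots when `l ≤ 2`. -/
theorem stmt_13 {k : Type*} [Field k] [IsAlgClosed k] [CharZero k]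
    (l : ℕ) (N : Polynomial k)
    (hN : N = C ((l * (l - 1) : ℕ) : k) * X ^ (l - 2) * (1 + X) ^ 2
        - C ((2 * l : ℕ) : k) * X ^ (l - 1) * (1 + X) + C 2 * X ^ l) :
    Multiset.card (N.roots.filter fun z => z ≠ 0 ∧ z ≠ -1) =
      if 3 ≤ l then 2 else 0 := by
  by_cases hl : 3 ≤ l
  · obtain ⟨m, rfl⟩ := Nat.exists_eq_add_of_le' hl
    rw [if_pos hl]
    set a : k := (Nat.cast ((m + 2) * (m + 1)) : k) with ha
    set b : k := (Nat.cast (2 * (m + 3) * (m + 1)) : k) with hb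
    set c : k := (Nat.cast ((m + 3) * (m + 2)) : k) with hc
    have ha0 : a ≠ 0 := by
      rw [ha]; exact Nat.cast_ne_zero.mpr (by positivity)
    have hc0 : c ≠ 0 := by
      rw [hc]; exact Nat.cast_ne_zero.mpr (by positivity)
    set Q : Polynomial k := C a * X ^ 2 + C b * X + C c with hQ
    have hfact : N = X ^ (m + 1) * Q := by
      rw [hN, hQ, ha, hb, hc]
      have e2 : m + 3 - 2 = m + 1 := by omega
      have e1 : m + 3 - 1 = m + 2 := by omega
      rw [e1, e2]
      simp only [map_natCast, map_ofNat]
      push_cast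
      ring
    have hQ0 : Q ≠ 0 := by
      intro h
      have := natDegree_quadratic ha0 (b := b) (c := c)
      rw [← hQ, h] at this
      simp at this
    have hNne : N ≠ 0 := by
      rw [hfact]
      exact mul_ne_zero (pow_ne_zero _ X_ne_zero) hQ0
    have hroots : N.roots = (m + 1) • ({0} : Multiset k) + Q.roots := by
      rw [hfact, roots_mul (by rw [← hfact]; exact hNne), roots_pow, roots_X]
    rw [hroots, Multiset.filter_add]
    have h1 : Multiset.filter (fun z => z ≠ 0 ∧ z ≠ -1)
        ((m + 1) • ({0} : Multiset k)) = 0 := by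
      rw [Multiset.nsmul_singleton]
      rw [Multiset.filter_eq_nil]
      intro z hz
      rw [Multiset.eq_of_mem_replicate hz]
      simp
    have hQe0 : Q.eval 0 ≠ 0 := by
      rw [hQ]; simpa using hc0
    have hQem1 : Q.eval (-1) ≠ 0 := by
      rw [hQ, ha, hb, hc]
      simp only [eval_add, eval_mul, eval_pow, eval_C, eval_X]
      push_cast
      have : ((m : k) + 2) * (m + 1) * (-1) ^ 2 + (2 * (m + 3) * (m + 1)) * (-1)
          + (m + 3) * (m + 2) = 2 := by ring
      rw [this]
      norm_num
    have h2 : Multiset.filter (fun z => z ≠ 0 ∧ z ≠ -1) Q.roots = Q.roots := by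
      rw [Multiset.filter_eq_self]
      intro z hz
      have hzr : Q.IsRoot z := isRoot_of_mem_roots hz
      constructor
      · rintro rfl; exact hQe0 hzr
      · rintro rfl; exact hQem1 hzr
    rw [h1, h2, zero_add]
    have hs : Multiset.card Q.roots = Q.natDegree :=
      (splits_iff_card_roots.mp (IsAlgClosed.splits Q))
    rw [hs, hQ, natDegree_quadratic ha0]
  · rw [if_neg hl]
    interval_cases l
    · have : N = C 2 := by
        rw [hN]; norm_num
      rw [this, roots_C]
      simp
    · have : N = C (-2) := by
        rw [hN]
        norm_num
        rw [map_ofNat C 2]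
        ring
      rw [this, roots_C]
      simp
    · have : N = C 2 := by
        rw [hN]
        norm_num
        rw [map_ofNat C 2, show (C 4 : Polynomial k) = 4 by
          rw [show (4:k) = ((4:ℕ):k) by norm_num, map_natCast]; norm_num]
        ring
      rw [this, roots_C]
      simp
end
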